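/- Let Σ ⊂ ℝⁿ be a compact smooth embedded k-dimensional submanifold without boundary and let (p,q) : [0,∞) → Σ × Σ be a chord shortening flow relative to Σ defined for all t ≥ 0. Then ‖η^T‖²(t) = |η^T(p(t))|² + |η^T(q(t))|² → 0 as t → +∞. -/

import Mathlib

open scoped RealInnerProductSpace ENNReal
open Set Filter

noncomputable section

/-- Euclidean `n`-space. -/
abbrev Euc (n : ℕ) := EuclideanSpace ℝ (Fin n)

/-- The orthogonal projection `π_K` onto a submodule `K`, as a map `Euc n → Euc n`. -/
def projSM {n : ℕ} (K : Submodule ℝ (Euc n)) (v : Euc n) : Euc n :=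
  (K.orthogonalProjectionOnto v : Euc n)

/-- `S` is a smooth embedded `k`-dimensional submanifold (without boundary) of `ℝⁿ`,
whose tangent space at each `x ∈ S` is the `k`-dimensional subspace `T x ⊆ ℝⁿ`:
every point of `S` has a neighbourhood in `S` which is the image of a smooth injective
parametrization, which is a homeomorphism onto its image, with injective differential whose
range is the assigned tangent space. -/
def IsSubmanifold (n k : ℕ) (S : Set (Euc n)) (T : Euc n → Submodule ℝ (Euc n)) : Prop :=
  ∀ x ∈ S, ∃ (f : Euc k → Euc n) (u : Set (Euc k)) (v : Set (Euc n)),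
    IsOpen u ∧ IsOpen v ∧ x ∈ v ∧ ContDiffOn ℝ (⊤ : ℕ∞) f u ∧ Set.InjOn f u ∧
    f '' u = S ∩ v ∧
    (∀ s ⊆ u, IsOpen s → ∃ w : Set (Euc n), IsOpen w ∧ f '' s = S ∩ w) ∧
    ∀ y ∈ u, Function.Injective (fderiv ℝ f y) ∧
      LinearMap.range ((fderiv ℝ f y) : Euc k →ₗ[ℝ] Euc n) = T (f y)

/-- The tangential part `η^T(x) = π_{T x}((x - y)/|x - y|)` of the outward unit conormal at `x`
of the chord from `x` to `y`. -/
def conormalT {n : ℕ} (T : Euc n → Submodule ℝ (Euc n)) (x y : Euc n) : Euc n :=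
  projSM (T x) (‖x - y‖⁻¹ • (x - y))

/-- A chord shortening flow relative to `S` (with tangent spaces `T`) on the time domain `dom`:
a pair of C¹ curves `p q : dom → S` with `p t ≠ q t`, satisfying
`p' = -π_{p}((p-q)/|p-q|)` and `q' = -π_{q}((q-p)/|q-p|)`. -/
def IsCSFOn {n : ℕ} (S : Set (Euc n)) (T : Euc n → Submodule ℝ (Euc n))
    (dom : Set ℝ) (p q : ℝ → Euc n) : Prop :=
  ∀ t ∈ dom, p t ∈ S ∧ q t ∈ S ∧ p t ≠ q t ∧
    HasDerivWithinAt p (-(conormalT T (p t) (q t))) dom t ∧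
    HasDerivWithinAt q (-(conormalT T (q t) (p t))) dom t

/-- The time interval `[0, Tm)` (where possibly `Tm = ∞`). -/
def csfDomain (Tm : ℝ≥0∞) : Set ℝ := {t : ℝ | 0 ≤ t ∧ ENNReal.ofReal t < Tm}

/-- A maximal chord shortening flow: one defined on `[0, Tm)` which cannot be extended to a
chord shortening flow on a strictly larger interval `[0, Tm')`. -/
def IsMaximalCSF {n : ℕ} (S : Set (Euc n)) (T : Euc n → Submodule ℝ (Euc n))
    (Tm : ℝ≥0∞) (p q : ℝ → Euc n) : Prop :=
  IsCSFOn S T (csfDomain Tm) p q ∧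
  ∀ Tm' : ℝ≥0∞, Tm < Tm' → ∀ p' q' : ℝ → Euc n,
    IsCSFOn S T (csfDomain Tm') p' q' →
    ¬ (∀ t ∈ csfDomain Tm, p' t = p t ∧ q' t = q t)


-- ===== auxiliary development =====
open Topology ContinuousLinearMap

section Aux

variable {k n : ℕ} {K : Submodule ℝ (Euc n)}



lemma projSM_inner_eq (v : Euc n) : ⟪projSM K v, v⟫ = ‖projSM K v‖ ^ 2 := by
  have h := K.starProjection_inner_eq_zero v (projSM K v) (K.orthogonalProjectionOnto v).2
  have h2 : ⟪projSM K v, v - projSM K v⟫ = 0 := by rw [real_inner_comm]; exact h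
  rw [inner_sub_right] at h2
  have : ⟪projSM K v, v⟫ = ⟪projSM K v, projSM K v⟫ := by linarith
  rw [this, real_inner_self_eq_norm_sq]

lemma projSM_pyth (v : Euc n) : ‖v‖ ^ 2 = ‖projSM K v‖ ^ 2 + ‖v - projSM K v‖ ^ 2 := by
  have h : ⟪projSM K v, v - projSM K v⟫ = 0 := by
    rw [real_inner_comm]
    exact K.starProjection_inner_eq_zero v (projSM K v) (K.orthogonalProjectionOnto v).2
  have := norm_add_sq_real (projSM K v) (v - projSM K v)
  simp only [add_sub_cancel, h, mul_zero, add_zero] at this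
  linarith

lemma projSM_norm_le (v : Euc n) : ‖projSM K v‖ ≤ ‖v‖ := by
  have := projSM_pyth (K := K) v
  nlinarith [norm_nonneg (projSM K v), norm_nonneg v, sq_nonneg ‖v - projSM K v‖]

lemma projSM_neg (v : Euc n) : projSM K (-v) = -projSM K v := by
  unfold projSM; rw [map_neg]; rfl

lemma projSM_sub_min (v : Euc n) {w : Euc n} (hw : w ∈ K) :
    ‖v - projSM K v‖ ≤ ‖v - w‖ := by
  have := Submodule.starProjection_minimal (U := K) v
  unfold projSM
  rw [← Submodule.starProjection_apply, this]
  exact csInf_le ⟨0, by rintro r ⟨x, rfl⟩; positivity⟩ ⟨⟨w, hw⟩, rfl⟩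


def Pmap (A : Euc k →L[ℝ] Euc n) : Euc n →L[ℝ] Euc n :=
  A ∘L (Ring.inverse (adjoint A ∘L A)) ∘L adjoint A

lemma isUnit_ata (A : Euc k →L[ℝ] Euc n) (hA : Function.Injective A) :
    IsUnit (adjoint A ∘L A) := by
  have hinj : Function.Injective (adjoint A ∘L A) := by
    intro w w' h
    set u := w - w' with hu
    have h0 : (adjoint A ∘L A) u = 0 := by rw [map_sub, h, sub_self]
    have key : ⟪A u, A u⟫ = 0 := by
      rw [← adjoint_inner_left A u (A u)]
      show ⟪(adjoint A ∘L A) u, u⟫ = 0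
      rw [h0, inner_zero_left]
    have : A u = 0 := inner_self_eq_zero.mp key
    rw [map_sub] at this
    exact hA (sub_eq_zero.mp this)
  have hbij : Function.Bijective ((adjoint A ∘L A) : Euc k →ₗ[ℝ] Euc k) :=
    ⟨hinj, LinearMap.surjective_of_injective hinj⟩
  let e : Euc k ≃L[ℝ] Euc k :=
    (LinearEquiv.ofBijective ((adjoint A ∘L A) : Euc k →ₗ[ℝ] Euc k) hbij).toContinuousLinearEquiv
  exact ⟨(ContinuousLinearEquiv.unitsEquiv ℝ (Euc k)).symm e, by ext x; rfl⟩

lemma Pmap_eq_projSM (A : Euc k →L[ℝ] Euc n) (hA : Function.Injective A)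
    (v : Euc n) : Pmap A v = projSM (LinearMap.range (A : Euc k →ₗ[ℝ] Euc n)) v := by
  have hu := isUnit_ata A hA
  symm
  unfold projSM
  apply Submodule.eq_starProjection_of_mem_orthogonal
  · exact ⟨(Ring.inverse (adjoint A ∘L A)) (adjoint A v), rfl⟩
  · rw [Submodule.mem_orthogonal]
    rintro w ⟨z, rfl⟩
    have hz : adjoint A (v - Pmap A v) = 0 := by
      have h1 : adjoint A (Pmap A v) = adjoint A v := by
        show (adjoint A ∘L A) (((Ring.inverse (adjoint A ∘L A)) ∘L adjoint A) v) = adjoint A v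
        calc ((adjoint A ∘L A) ∘L (Ring.inverse (adjoint A ∘L A)) ∘L adjoint A) v
            = (((adjoint A ∘L A) * (Ring.inverse (adjoint A ∘L A))) ∘L adjoint A) v := rfl
          _ = adjoint A v := by rw [Ring.mul_inverse_cancel _ hu]; rfl
      rw [map_sub, h1, sub_self]
    rw [real_inner_comm]
    show ⟪v - Pmap A v, A z⟫ = 0
    rw [← adjoint_inner_left A z (v - Pmap A v)]
    rw [hz, inner_zero_left]

lemma continuousAt_clm_comp {X : Type*} [TopologicalSpace X] {E F G : Type*}
    [NormedAddCommGroup E] [NormedSpace ℝ E] [NormedAddCommGroup F] [NormedSpace ℝ F]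
    [NormedAddCommGroup G] [NormedSpace ℝ G]
    {g : X → F →L[ℝ] G} {f : X → E →L[ℝ] F} {x : X}
    (hg : ContinuousAt g x) (hf : ContinuousAt f x) :
    ContinuousAt (fun y => (g y).comp (f y)) x :=
  hg.clm_comp hf

lemma continuousAt_Pmap (A : Euc k →L[ℝ] Euc n) (hA : Function.Injective A) :
    ContinuousAt Pmap A := by
  have hadj : Continuous fun B : Euc k →L[ℝ] Euc n => adjoint B :=
    (ContinuousLinearMap.adjoint : (Euc k →L[ℝ] Euc n) ≃ₗᵢ⋆[ℝ] _).continuous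
  have h1 : Continuous fun B : Euc k →L[ℝ] Euc n => adjoint B ∘L B :=
    hadj.clm_comp continuous_id
  have hu := isUnit_ata A hA
  have h2 : ContinuousAt (fun B : Euc k →L[ℝ] Euc n => Ring.inverse (adjoint B ∘L B)) A := by
    have := NormedRing.inverse_continuousAt hu.unit
    rw [IsUnit.unit_spec] at this
    exact ContinuousAt.comp (f := fun B : Euc k →L[ℝ] Euc n => adjoint B ∘L B) this h1.continuousAt
  exact continuousAt_clm_comp continuousAt_id
    (continuousAt_clm_comp h2 hadj.continuousAt)


lemma projSM_sub {K : Submodule ℝ (Euc n)} (a b : Euc n) :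
    projSM K a - projSM K b = projSM K (a - b) := by
  unfold projSM
  rw [map_sub]
  rfl

lemma unit_diff {a b : Euc n} (ha : a ≠ 0) (hb : b ≠ 0) :
    ‖‖a‖⁻¹ • a - ‖b‖⁻¹ • b‖ ≤ 2 * ‖a - b‖ / ‖a‖ := by
  have hna : (0:ℝ) < ‖a‖ := norm_pos_iff.mpr ha
  have hnb : (0:ℝ) < ‖b‖ := norm_pos_iff.mpr hb
  have key : ‖a‖⁻¹ • a - ‖b‖⁻¹ • b = ‖a‖⁻¹ • (a - b) + (‖a‖⁻¹ - ‖b‖⁻¹) • b := by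
    rw [smul_sub, sub_smul]; abel
  rw [key]
  have h1 : ‖‖a‖⁻¹ • (a - b)‖ = ‖a - b‖ / ‖a‖ := by
    rw [norm_smul, norm_inv, norm_norm]; ring
  have h2 : ‖(‖a‖⁻¹ - ‖b‖⁻¹) • b‖ ≤ ‖a - b‖ / ‖a‖ := by
    rw [norm_smul]
    have : ‖(‖a‖⁻¹ - ‖b‖⁻¹ : ℝ)‖ = |‖b‖ - ‖a‖| / (‖a‖ * ‖b‖) := by
      rw [Real.norm_eq_abs]
      have : ‖a‖⁻¹ - ‖b‖⁻¹ = (‖b‖ - ‖a‖) / (‖a‖ * ‖b‖) := by field_simp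
      rw [this, abs_div]
      congr 1
      rw [abs_of_pos (by positivity)]
    rw [this]
    have habs : |‖b‖ - ‖a‖| ≤ ‖a - b‖ := by
      rw [abs_sub_comm]
      exact abs_norm_sub_norm_le a b
    calc |‖b‖ - ‖a‖| / (‖a‖ * ‖b‖) * ‖b‖ = |‖b‖ - ‖a‖| / ‖a‖ := by field_simp
      _ ≤ ‖a - b‖ / ‖a‖ := by gcongr
  calc ‖‖a‖⁻¹ • (a - b) + (‖a‖⁻¹ - ‖b‖⁻¹) • b‖
      ≤ ‖‖a‖⁻¹ • (a - b)‖ + ‖(‖a‖⁻¹ - ‖b‖⁻¹) • b‖ := norm_add_le _ _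
    _ ≤ ‖a - b‖ / ‖a‖ + ‖a - b‖ / ‖a‖ := by rw [h1]; exact add_le_add le_rfl h2
    _ = 2 * ‖a - b‖ / ‖a‖ := by ring


section Flow
variable {S : Set (Euc n)} {T : Euc n → Submodule ℝ (Euc n)} {p q : ℝ → Euc n}

/-- `g`, the quantity in the theorem. -/
def gfun (T : Euc n → Submodule ℝ (Euc n)) (p q : ℝ → Euc n) (t : ℝ) : ℝ :=
  ‖conormalT T (p t) (q t)‖ ^ 2 + ‖conormalT T (q t) (p t)‖ ^ 2

lemma norm_conormalT_le {x y : Euc n} (hxy : x ≠ y) : ‖conormalT T x y‖ ≤ 1 := by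
  unfold conormalT
  refine (projSM_norm_le _).trans ?_
  rw [norm_smul, norm_inv, norm_norm, inv_mul_cancel₀ (by
    simpa [sub_eq_zero] using hxy : ‖x - y‖ ≠ 0)]

lemma gfun_nonneg (t : ℝ) : 0 ≤ gfun T p q t := by unfold gfun; positivity

lemma gfun_le_two (hflow : IsCSFOn S T (Set.Ici 0) p q) {t : ℝ} (ht : t ∈ Ici (0:ℝ)) : gfun T p q t ≤ 2 := by
  obtain ⟨_, _, hne, _, _⟩ := hflow t ht
  have h1 := norm_conormalT_le (T := T) hne
  have h2 := norm_conormalT_le (T := T) (Ne.symm hne)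
  have n1 : (0:ℝ) ≤ ‖conormalT T (p t) (q t)‖ := norm_nonneg _
  have n2 : (0:ℝ) ≤ ‖conormalT T (q t) (p t)‖ := norm_nonneg _
  unfold gfun; nlinarith

lemma ell_hasDeriv (hflow : IsCSFOn S T (Set.Ici 0) p q) {t : ℝ} (ht : t ∈ Ici (0:ℝ)) :
    HasDerivWithinAt (fun s => ‖p s - q s‖) (-(gfun T p q t)) (Ici 0) t := by
  obtain ⟨_, _, hne, hp, hq⟩ := hflow t ht
  have hr : HasDerivWithinAt (fun s => p s - q s)
      (-(conormalT T (p t) (q t)) - -(conormalT T (q t) (p t))) (Ici 0) t := hp.sub hq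
  set r : ℝ → Euc n := fun s => p s - q s with hrdef
  set d : Euc n := -(conormalT T (p t) (q t)) - -(conormalT T (q t) (p t)) with hddef
  have hrne : r t ≠ 0 := sub_ne_zero.mpr hne
  have hℓpos : (0:ℝ) < ‖r t‖ := norm_pos_iff.mpr hrne
  set η : Euc n := ‖r t‖⁻¹ • r t with hη
  have hqp : q t - p t = -(r t) := by simp [hrdef]
  have hconp : conormalT T (p t) (q t) = projSM (T (p t)) η := rfl
  have hconq : conormalT T (q t) (p t) = -projSM (T (q t)) η := by
    unfold conormalT
    rw [hqp, norm_neg, smul_neg, ← hη, projSM_neg]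
  have hφ : HasDerivWithinAt (fun s => ⟪r s, r s⟫)
      (⟪r t, d⟫ + ⟪d, r t⟫) (Ici 0) t := hr.inner ℝ hr
  have hne0 : ⟪r t, r t⟫ ≠ 0 := by rw [real_inner_self_eq_norm_sq]; positivity
  have hsq : HasDerivWithinAt (fun s => Real.sqrt ⟪r s, r s⟫)
      ((1 / (2 * Real.sqrt ⟪r t, r t⟫)) * (⟪r t, d⟫ + ⟪d, r t⟫)) (Ici 0) t :=
    (Real.hasDerivAt_sqrt hne0).comp_hasDerivWithinAt t hφ
  have hfun : (fun s => Real.sqrt ⟪r s, r s⟫) = fun s => ‖r s‖ := by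
    funext s; rw [real_inner_self_eq_norm_sq, Real.sqrt_sq (norm_nonneg _)]
  rw [hfun] at hsq
  convert hsq using 1
  rw [real_inner_self_eq_norm_sq, Real.sqrt_sq (norm_nonneg _)]
  have hrη : r t = ‖r t‖ • η := by
    rw [hη, smul_smul, mul_inv_cancel₀ (ne_of_gt hℓpos), one_smul]
  have hd2 : d = -(projSM (T (p t)) η + projSM (T (q t)) η) := by
    rw [hddef, hconp, hconq]; abel
  have hdη : ⟪d, η⟫ = -(gfun T p q t) := by
    have e1 : ⟪projSM (T (p t)) η, η⟫ = ‖projSM (T (p t)) η‖ ^ 2 := projSM_inner_eq η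
    have e2 : ⟪projSM (T (q t)) η, η⟫ = ‖projSM (T (q t)) η‖ ^ 2 := projSM_inner_eq η
    have hg : gfun T p q t = ‖projSM (T (p t)) η‖ ^ 2 + ‖projSM (T (q t)) η‖ ^ 2 := by
      unfold gfun; rw [hconp, hconq, norm_neg]
    rw [hd2, inner_neg_left, inner_add_left, e1, e2, hg]
  have hinner : ⟪d, r t⟫ = ‖r t‖ * (-(gfun T p q t)) := by
    have h1 : ⟪d, r t⟫ = ⟪d, ‖r t‖ • η⟫ := by rw [← hrη]
    rw [h1, real_inner_smul_right, hdη]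
  have hinner2 : ⟪r t, d⟫ = ‖r t‖ * (-(gfun T p q t)) := by
    rw [real_inner_comm]; exact hinner
  rw [hinner, hinner2]
  field_simp
  ring


lemma ell_drop (hflow : IsCSFOn S T (Set.Ici 0) p q) {a b c : ℝ} (ha : 0 ≤ a) (hab : a ≤ b)
    (hc : ∀ t ∈ Icc a b, c ≤ gfun T p q t) :
    ‖p b - q b‖ ≤ ‖p a - q a‖ - c * (b - a) := by
  set f : ℝ → ℝ := fun t => ‖p t - q t‖ + c * t with hf
  have hIcc : Icc a b ⊆ Ici (0:ℝ) := fun t ht => le_trans ha ht.1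
  have hcont : ContinuousOn (fun s => ‖p s - q s‖) (Ici 0) := fun t ht =>
    (ell_hasDeriv hflow ht).continuousWithinAt
  have hder : ∀ t ∈ interior (Icc a b), HasDerivAt f (-(gfun T p q t) + c) t := by
    intro t ht
    rw [interior_Icc] at ht
    have htpos : (0:ℝ) < t := lt_of_le_of_lt ha ht.1
    have h1 : HasDerivAt (fun s => ‖p s - q s‖) (-(gfun T p q t)) t :=
      (ell_hasDeriv hflow (le_of_lt htpos)).hasDerivAt (Ici_mem_nhds htpos)
    have h2 : HasDerivAt (fun s => c * s) c t := by
      simpa using (hasDerivAt_id t).const_mul c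
    exact h1.add h2
  have hanti : AntitoneOn f (Icc a b) := by
    apply antitoneOn_of_deriv_nonpos (convex_Icc a b)
    · exact (hcont.mono hIcc).add (continuous_const.mul continuous_id).continuousOn
    · intro t ht
      exact (hder t ht).differentiableAt.differentiableWithinAt
    · intro t ht
      rw [(hder t ht).deriv]
      have : c ≤ gfun T p q t := hc t (interior_subset ht)
      linarith
  have := hanti (left_mem_Icc.mpr hab) (right_mem_Icc.mpr hab) hab
  simp only [hf] at this
  linarith

lemma ell_antitone (hflow : IsCSFOn S T (Set.Ici 0) p q) :
    AntitoneOn (fun t => ‖p t - q t‖) (Ici 0) := by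
  intro a ha b hb hab
  have := ell_drop hflow (c := 0) ha hab (fun t _ => gfun_nonneg t)
  simpa using this

lemma ell_pos (hflow : IsCSFOn S T (Set.Ici 0) p q) {t : ℝ} (ht : t ∈ Ici (0:ℝ)) :
    0 < ‖p t - q t‖ := by
  obtain ⟨_, _, hne, _, _⟩ := hflow t ht
  exact norm_pos_iff.mpr (sub_ne_zero.mpr hne)

lemma p_lip (hflow : IsCSFOn S T (Set.Ici 0) p q) {a b : ℝ} (ha : a ∈ Ici (0:ℝ))
    (hb : b ∈ Ici (0:ℝ)) : ‖p b - p a‖ ≤ ‖b - a‖ := by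
  have := Convex.norm_image_sub_le_of_norm_hasDerivWithin_le
    (f := p) (f' := fun t => -(conormalT T (p t) (q t))) (C := 1) (s := Ici 0)
    (fun t ht => (hflow t ht).2.2.2.1)
    (fun t ht => by
      rw [norm_neg]; exact norm_conormalT_le (hflow t ht).2.2.1)
    (convex_Ici 0) ha hb
  simpa using this

lemma q_lip (hflow : IsCSFOn S T (Set.Ici 0) p q) {a b : ℝ} (ha : a ∈ Ici (0:ℝ))
    (hb : b ∈ Ici (0:ℝ)) : ‖q b - q a‖ ≤ ‖b - a‖ := by
  have := Convex.norm_image_sub_le_of_norm_hasDerivWithin_le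
    (f := q) (f' := fun t => -(conormalT T (q t) (p t))) (C := 1) (s := Ici 0)
    (fun t ht => (hflow t ht).2.2.2.2)
    (fun t ht => by
      rw [norm_neg]; exact norm_conormalT_le (Ne.symm (hflow t ht).2.2.1))
    (convex_Ici 0) ha hb
  simpa using this


set_option maxHeartbeats 1000000 in
lemma chart_local (hsub : IsSubmanifold n k S T) {x : Euc n} (hx : x ∈ S) {ε : ℝ}
    (hε : 0 < ε) :
    ∃ δ > 0, (∀ y ∈ S, ‖y - x‖ < δ → ∀ v : Euc n,
        ‖projSM (T y) v - projSM (T x) v‖ ≤ ε * ‖v‖) ∧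
      (∀ y ∈ S, ∀ z ∈ S, ‖y - x‖ < δ → ‖z - x‖ < δ → y ≠ z →
        (1:ℝ)/2 ≤ ‖projSM (T y) (‖y - z‖⁻¹ • (y - z))‖) := by
  obtain ⟨f, u, v, hu, hv, hxv, hcd, hinj, himg, hopen, htang⟩ := hsub x hx
  have hxmem : x ∈ f '' u := by rw [himg]; exact ⟨hx, hxv⟩
  obtain ⟨a, hau, hfa⟩ := hxmem
  have hdiff : ∀ ξ ∈ u, DifferentiableAt ℝ f ξ := fun ξ hξ =>
    (hcd.contDiffAt (hu.mem_nhds hξ)).differentiableAt (by simp)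
  have hDf : ContinuousOn (fderiv ℝ f) u := by
    have h := hcd.continuousOn_fderiv_of_isOpen hu (by exact_mod_cast le_top)
    exact h
  have hDfa : ContinuousAt (fderiv ℝ f) a := (hDf a hau).continuousAt (hu.mem_nhds hau)
  obtain ⟨hinjDa, hranDa⟩ := htang a hau
  obtain ⟨Kc, hKc, hanti⟩ := LinearMap.exists_antilipschitzWith
    ((fderiv ℝ f a : Euc k →L[ℝ] Euc n) : Euc k →ₗ[ℝ] Euc n)
    (LinearMap.ker_eq_bot.mpr hinjDa)
  set c₀ : ℝ := (Kc : ℝ)⁻¹ with hc₀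
  have hc₀pos : 0 < c₀ := by positivity
  have hantinorm : ∀ w : Euc k, c₀ * ‖w‖ ≤ ‖(fderiv ℝ f a) w‖ := by
    intro w
    have h := hanti.le_mul_dist w 0
    simp only [map_zero, dist_zero_right] at h
    rw [hc₀, inv_mul_le_iff₀ (by positivity)]
    exact h
  set ε' : ℝ := c₀ / 7 with hε'def
  have hε'pos : 0 < ε' := by positivity
  have hε'le : ε' ≤ c₀ / 7 := le_of_eq hε'def
  set F : Euc k → (Euc n →L[ℝ] Euc n) := fun b => Pmap (fderiv ℝ f b) with hFdef
  have hFa : ContinuousAt F a := (continuousAt_Pmap _ hinjDa).comp hDfa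
  have e1 : ∀ᶠ ξ in 𝓝 a, ‖fderiv ℝ f ξ - fderiv ℝ f a‖ < ε' := by
    have h0 : Tendsto (fun ξ => ‖fderiv ℝ f ξ - fderiv ℝ f a‖) (𝓝 a) (𝓝 0) := by
      have h1 : ContinuousAt (fun ξ => fderiv ℝ f ξ - fderiv ℝ f a) a :=
        hDfa.sub continuousAt_const
      have h3 : Tendsto (fun ξ => ‖fderiv ℝ f ξ - fderiv ℝ f a‖) (𝓝 a)
          (𝓝 ‖fderiv ℝ f a - fderiv ℝ f a‖) := h1.norm
      rwa [sub_self, norm_zero] at h3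
    exact h0.eventually_lt_const hε'pos
  have e2 : ∀ᶠ ξ in 𝓝 a, ‖F ξ - F a‖ < ε := by
    have h0 : Tendsto (fun ξ => ‖F ξ - F a‖) (𝓝 a) (𝓝 0) := by
      have h1 : ContinuousAt (fun ξ => F ξ - F a) a := hFa.sub continuousAt_const
      have h3 : Tendsto (fun ξ => ‖F ξ - F a‖) (𝓝 a) (𝓝 ‖F a - F a‖) := h1.norm
      rwa [sub_self, norm_zero] at h3
    exact h0.eventually_lt_const hε
  have e3 : ∀ᶠ ξ in 𝓝 a, ξ ∈ u := hu.mem_nhds hau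
  obtain ⟨r, hr, hball⟩ := Metric.eventually_nhds_iff_ball.mp ((e1.and e2).and e3)
  have hballu : Metric.ball a r ⊆ u := fun ξ hξ => (hball ξ hξ).2
  obtain ⟨w, hwopen, hfw⟩ := hopen (Metric.ball a r) hballu Metric.isOpen_ball
  have hxw : x ∈ w := by
    have : x ∈ f '' Metric.ball a r := ⟨a, Metric.mem_ball_self hr, hfa⟩
    rw [hfw] at this; exact this.2
  obtain ⟨δ, hδ, hδball⟩ := Metric.isOpen_iff.mp hwopen x hxw
  refine ⟨δ, hδ, ?_, ?_⟩
  · -- projection continuity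
    intro y hy hyx vv
    have hyw : y ∈ S ∩ w := ⟨hy, hδball (by rwa [Metric.mem_ball, dist_eq_norm])⟩
    rw [← hfw] at hyw
    obtain ⟨b, hb, rfl⟩ := hyw
    have hbu : b ∈ u := hballu hb
    obtain ⟨hinjDb, hranDb⟩ := htang b hbu
    have hb1 : projSM (T (f b)) vv = F b vv := by
      rw [hFdef, Pmap_eq_projSM _ hinjDb, hranDb]
    have ha1 : projSM (T x) vv = F a vv := by
      rw [hFdef, Pmap_eq_projSM _ hinjDa, hranDa, hfa]
    rw [hb1, ha1]
    have : F b vv - F a vv = (F b - F a) vv := by simp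
    rw [this]
    calc ‖(F b - F a) vv‖ ≤ ‖F b - F a‖ * ‖vv‖ := le_opNorm _ _
      _ ≤ ε * ‖vv‖ := by
          apply mul_le_mul_of_nonneg_right _ (norm_nonneg _)
          exact le_of_lt (hball b hb).1.2
  · -- chord direction close to tangent
    intro y hy z hz hyx hzx hyz
    have hyw : y ∈ S ∩ w := ⟨hy, hδball (by rwa [Metric.mem_ball, dist_eq_norm])⟩
    have hzw : z ∈ S ∩ w := ⟨hz, hδball (by rwa [Metric.mem_ball, dist_eq_norm])⟩
    rw [← hfw] at hyw hzw
    obtain ⟨b, hb, rfl⟩ := hyw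
    obtain ⟨c, hc, rfl⟩ := hzw
    have hbu : b ∈ u := hballu hb
    have hcu : c ∈ u := hballu hc
    obtain ⟨hinjDb, hranDb⟩ := htang b hbu
    have hbc : b ≠ c := fun h => hyz (by rw [h])
    have hbcnorm : (0:ℝ) < ‖b - c‖ := by
      rw [norm_pos_iff, sub_ne_zero]; exact hbc
    -- mean value inequality
    have hmvt : ‖f b - f c - (fderiv ℝ f b) (b - c)‖ ≤ 2 * ε' * ‖b - c‖ := by
      apply (convex_ball a r).norm_image_sub_le_of_norm_hasFDerivWithin_le'
        (fun ξ hξ => ((hdiff ξ (hballu hξ)).hasFDerivAt).hasFDerivWithinAt)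
        (fun ξ hξ => ?_) hc hb
      calc ‖fderiv ℝ f ξ - fderiv ℝ f b‖
          ≤ ‖fderiv ℝ f ξ - fderiv ℝ f a‖ + ‖fderiv ℝ f a - fderiv ℝ f b‖ := by
            have : fderiv ℝ f ξ - fderiv ℝ f b =
              (fderiv ℝ f ξ - fderiv ℝ f a) + (fderiv ℝ f a - fderiv ℝ f b) := by abel
            rw [this]; exact norm_add_le _ _
        _ ≤ ε' + ε' := by
            have h1 := (hball ξ hξ).1.1
            have h2 := (hball b hb).1.1
            rw [norm_sub_rev] at h2
            exact add_le_add (le_of_lt h1) (le_of_lt h2)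
        _ = 2 * ε' := by ring
    -- lower bound on ‖Df_b w‖
    have hDblow : ∀ w₀ : Euc k, (c₀ - ε') * ‖w₀‖ ≤ ‖(fderiv ℝ f b) w₀‖ := by
      intro w₀
      have h1 := hantinorm w₀
      have h2 : ‖(fderiv ℝ f a) w₀ - (fderiv ℝ f b) w₀‖ ≤ ε' * ‖w₀‖ := by
        have : (fderiv ℝ f a) w₀ - (fderiv ℝ f b) w₀ = (fderiv ℝ f a - fderiv ℝ f b) w₀ := by
          simp
        rw [this]
        calc ‖(fderiv ℝ f a - fderiv ℝ f b) w₀‖ ≤ ‖fderiv ℝ f a - fderiv ℝ f b‖ * ‖w₀‖ :=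
            le_opNorm _ _
          _ ≤ ε' * ‖w₀‖ := by
              apply mul_le_mul_of_nonneg_right _ (norm_nonneg _)
              have h2 := (hball b hb).1.1
              rw [norm_sub_rev] at h2
              exact le_of_lt h2
      have h3 : ‖(fderiv ℝ f a) w₀‖ - ‖(fderiv ℝ f a) w₀ - (fderiv ℝ f b) w₀‖
          ≤ ‖(fderiv ℝ f b) w₀‖ := by
        have := norm_sub_norm_le ((fderiv ℝ f a) w₀) ((fderiv ℝ f a) w₀ - (fderiv ℝ f b) w₀)
        simpa using this
      nlinarith [norm_nonneg w₀]
    -- lower bound on chord length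
    have hlow : (c₀ - 3 * ε') * ‖b - c‖ ≤ ‖f b - f c‖ := by
      have h1 := hDblow (b - c)
      have h2 := norm_sub_norm_le ((fderiv ℝ f b) (b - c)) (f b - f c)
      rw [norm_sub_rev ((fderiv ℝ f b) (b - c)) (f b - f c)] at h2
      nlinarith
    have hchordpos : (0:ℝ) < ‖f b - f c‖ := by
      rw [norm_pos_iff, sub_ne_zero]; exact hyz
    -- the tangent approximation
    set u₀ : Euc n := ‖f b - f c‖⁻¹ • (f b - f c) with hu₀
    have hu₀norm : ‖u₀‖ = 1 := by
      rw [hu₀, norm_smul, norm_inv, norm_norm, inv_mul_cancel₀ (ne_of_gt hchordpos)]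
    set w' : Euc n := ‖f b - f c‖⁻¹ • ((fderiv ℝ f b) (b - c)) with hw'
    have hw'mem : w' ∈ T (f b) := by
      rw [← hranDb]
      exact Submodule.smul_mem _ _ ⟨b - c, rfl⟩
    have hdist : ‖u₀ - w'‖ ≤ 1 / 2 := by
      rw [hu₀, hw', ← smul_sub, norm_smul, norm_inv, norm_norm]
      rw [inv_mul_le_iff₀ hchordpos]
      have hee : 2 * ε' * ‖b - c‖ ≤ 1 / 2 * ((c₀ - 3*ε') * ‖b - c‖) := by
        nlinarith
      calc ‖f b - f c - (fderiv ℝ f b) (b - c)‖ ≤ 2 * ε' * ‖b - c‖ := hmvt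
        _ ≤ 1 / 2 * ((c₀ - 3*ε') * ‖b - c‖) := hee
        _ ≤ 1 / 2 * ‖f b - f c‖ := by
            apply mul_le_mul_of_nonneg_left hlow; norm_num
        _ = ‖f b - f c‖ * (1 / 2) := by ring
    have hmin : ‖u₀ - projSM (T (f b)) u₀‖ ≤ 1 / 2 := le_trans (projSM_sub_min u₀ hw'mem) hdist
    have hpyth := projSM_pyth (K := T (f b)) u₀
    rw [hu₀norm] at hpyth
    have h5 : (3:ℝ)/4 ≤ ‖projSM (T (f b)) u₀‖ ^ 2 := by
      nlinarith [norm_nonneg (u₀ - projSM (T (f b)) u₀)]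
    nlinarith [norm_nonneg (projSM (T (f b)) u₀)]


lemma global_chart (hsub : IsSubmanifold n k S T) (hcpt : IsCompact S) {ε : ℝ} (hε : 0 < ε) :
    ∃ δ > 0, ∀ x ∈ S, ∀ y ∈ S, ‖y - x‖ < δ →
      ((∀ v : Euc n, ‖projSM (T y) v - projSM (T x) v‖ ≤ 2 * ε * ‖v‖) ∧
       (x ≠ y → (1:ℝ)/2 ≤ ‖projSM (T x) (‖x - y‖⁻¹ • (x - y))‖)) := by
  have H : ∀ x ∈ S, ∃ δ, 0 < δ ∧
      ((∀ y ∈ S, ‖y - x‖ < δ → ∀ v : Euc n,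
        ‖projSM (T y) v - projSM (T x) v‖ ≤ ε * ‖v‖) ∧
      (∀ y ∈ S, ∀ z ∈ S, ‖y - x‖ < δ → ‖z - x‖ < δ → y ≠ z →
        (1:ℝ)/2 ≤ ‖projSM (T y) (‖y - z‖⁻¹ • (y - z))‖)) := by
    intro x hx
    obtain ⟨δ, hδ, h1, h2⟩ := chart_local hsub hx hε
    exact ⟨δ, hδ, h1, h2⟩
  choose! δf hδf using H
  obtain ⟨t, htS, hcov⟩ := hcpt.elim_nhds_subcover (fun x => Metric.ball x (δf x / 2))
    (fun x hx => Metric.ball_mem_nhds x (by have := (hδf x hx).1; positivity))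
  by_cases hne : t.Nonempty
  · set δ : ℝ := t.inf' hne (fun x => δf x / 2) with hδdef
    have hδpos : 0 < δ := by
      rw [hδdef, Finset.lt_inf'_iff]
      intro x hxt
      have := (hδf x (htS x hxt)).1
      positivity
    refine ⟨δ, hδpos, ?_⟩
    intro x hx y hy hxy
    obtain ⟨i, hit, hxball⟩ : ∃ i ∈ t, x ∈ Metric.ball i (δf i / 2) := by
      have := hcov hx
      simpa using this
    have hiS : i ∈ S := htS i hit
    have hδi : δ ≤ δf i / 2 := Finset.inf'_le _ hit
    have hxi : ‖x - i‖ < δf i := by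
      rw [Metric.mem_ball, dist_eq_norm] at hxball
      have h2 : δf i / 2 < δf i := by
        have := (hδf i hiS).1; linarith
      linarith
    have hyi : ‖y - i‖ < δf i := by
      rw [Metric.mem_ball, dist_eq_norm] at hxball
      have : ‖y - i‖ ≤ ‖y - x‖ + ‖x - i‖ := norm_sub_le_norm_sub_add_norm_sub y x i
      linarith
    obtain ⟨hp1, hp2⟩ := (hδf i hiS).2
    constructor
    · intro v
      have h1 := hp1 x hx hxi v
      have h2 := hp1 y hy hyi v
      calc ‖projSM (T y) v - projSM (T x) v‖
          ≤ ‖projSM (T y) v - projSM (T i) v‖ + ‖projSM (T i) v - projSM (T x) v‖ := by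
            have : projSM (T y) v - projSM (T x) v =
              (projSM (T y) v - projSM (T i) v) + (projSM (T i) v - projSM (T x) v) := by abel
            rw [this]; exact norm_add_le _ _
        _ ≤ ε * ‖v‖ + ε * ‖v‖ := by
            rw [norm_sub_rev (projSM (T i) v)]
            exact add_le_add h2 h1
        _ = 2 * ε * ‖v‖ := by ring
    · intro hneq
      exact hp2 x hx y hy hxi hyi hneq
  · refine ⟨1, one_pos, ?_⟩
    intro x hx
    exfalso
    rw [Finset.not_nonempty_iff_eq_empty] at hne
    have := hcov hx
    simp [hne] at this


set_option maxHeartbeats 2000000 in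
lemma conormal_P_diff (hflow : IsCSFOn S T (Set.Ici 0) p q)
    (hsub : IsSubmanifold n k S T) (hcpt : IsCompact S)
    {δ₀ : ℝ} (hδ₀ : 0 < δ₀) (hL : ∀ t ∈ Ici (0:ℝ), δ₀ ≤ ‖p t - q t‖)
    {ε₀ : ℝ} (hε₀ : 0 < ε₀) :
    ∃ τ > 0, ∀ s ∈ Ici (0:ℝ), ∀ t ∈ Ici (0:ℝ), |s - t| ≤ τ →
      |gfun T p q s - gfun T p q t| ≤ ε₀ := by
  obtain ⟨δ₁, hδ₁, hchart⟩ := global_chart hsub hcpt (ε := ε₀ / 32) (by positivity)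
  set τ : ℝ := min (δ₁ / 4) (ε₀ * δ₀ / 64) with hτdef
  have hτpos : 0 < τ := by
    apply lt_min (by positivity) (by positivity)
  refine ⟨τ, hτpos, ?_⟩
  intro s hs t ht hst
  -- basic data
  obtain ⟨hpS_s, hqS_s, hne_s, _, _⟩ := hflow s hs
  obtain ⟨hpS_t, hqS_t, hne_t, _, _⟩ := hflow t ht
  have hrs : p s - q s ≠ 0 := sub_ne_zero.mpr hne_s
  have hrt : p t - q t ≠ 0 := sub_ne_zero.mpr hne_t
  have hrs' : q s - p s ≠ 0 := sub_ne_zero.mpr (Ne.symm hne_s)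
  have hrt' : q t - p t ≠ 0 := sub_ne_zero.mpr (Ne.symm hne_t)
  have hLs := hL s hs
  have hLt := hL t ht
  -- curve displacement bounds
  have hpdiff : ‖p s - p t‖ ≤ τ := le_trans (p_lip hflow ht hs) (by rwa [Real.norm_eq_abs])
  have hqdiff : ‖q s - q t‖ ≤ τ := le_trans (q_lip hflow ht hs) (by rwa [Real.norm_eq_abs])
  have hrdiff : ‖(p s - q s) - (p t - q t)‖ ≤ 2 * τ := by
    have : (p s - q s) - (p t - q t) = (p s - p t) - (q s - q t) := by abel
    rw [this]
    calc ‖(p s - p t) - (q s - q t)‖ ≤ ‖p s - p t‖ + ‖q s - q t‖ := norm_sub_le _ _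
      _ ≤ 2 * τ := by linarith
  have hrdiff' : ‖(q s - p s) - (q t - p t)‖ ≤ 2 * τ := by
    have : (q s - p s) - (q t - p t) = -((p s - q s) - (p t - q t)) := by abel
    rw [this, norm_neg]; exact hrdiff
  -- unit vector differences
  have huP : ‖(‖p s - q s‖⁻¹ • (p s - q s)) - (‖p t - q t‖⁻¹ • (p t - q t))‖ ≤ 4 * τ / δ₀ := by
    calc ‖(‖p s - q s‖⁻¹ • (p s - q s)) - (‖p t - q t‖⁻¹ • (p t - q t))‖
        ≤ 2 * ‖(p s - q s) - (p t - q t)‖ / ‖p s - q s‖ := unit_diff hrs hrt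
      _ ≤ 4 * τ / δ₀ :=
          div_le_div₀ (by positivity) (by linarith) hδ₀ hLs
  have huQ : ‖(‖q s - p s‖⁻¹ • (q s - p s)) - (‖q t - p t‖⁻¹ • (q t - p t))‖ ≤ 4 * τ / δ₀ := by
    have hQs : δ₀ ≤ ‖q s - p s‖ := by rwa [norm_sub_rev]
    calc ‖(‖q s - p s‖⁻¹ • (q s - p s)) - (‖q t - p t‖⁻¹ • (q t - p t))‖
        ≤ 2 * ‖(q s - p s) - (q t - p t)‖ / ‖q s - p s‖ := unit_diff hrs' hrt'
      _ ≤ 4 * τ / δ₀ :=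
          div_le_div₀ (by positivity) (by linarith) hδ₀ hQs
  -- tangent projection movement
  have hτδ₁ : τ < δ₁ := lt_of_le_of_lt (min_le_left _ _) (by linarith)
  have hchartP := (hchart (p t) hpS_t (p s) hpS_s (lt_of_le_of_lt hpdiff hτδ₁)).1
  have hchartQ := (hchart (q t) hqS_t (q s) hqS_s (lt_of_le_of_lt hqdiff hτδ₁)).1
  -- conormal differences
  have hunit_t : ‖‖p t - q t‖⁻¹ • (p t - q t)‖ = 1 := by
    rw [norm_smul, norm_inv, norm_norm, inv_mul_cancel₀ (norm_ne_zero_iff.mpr hrt)]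
  have hunit_t' : ‖‖q t - p t‖⁻¹ • (q t - p t)‖ = 1 := by
    rw [norm_smul, norm_inv, norm_norm, inv_mul_cancel₀ (norm_ne_zero_iff.mpr hrt')]
  have hconP : ‖conormalT T (p s) (q s) - conormalT T (p t) (q t)‖ ≤ 4 * τ / δ₀ + ε₀ / 16 := by
    unfold conormalT
    set us : Euc n := ‖p s - q s‖⁻¹ • (p s - q s)
    set ut : Euc n := ‖p t - q t‖⁻¹ • (p t - q t)
    calc ‖projSM (T (p s)) us - projSM (T (p t)) ut‖
        ≤ ‖projSM (T (p s)) us - projSM (T (p s)) ut‖ +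
          ‖projSM (T (p s)) ut - projSM (T (p t)) ut‖ := by
          have : projSM (T (p s)) us - projSM (T (p t)) ut =
            (projSM (T (p s)) us - projSM (T (p s)) ut) +
            (projSM (T (p s)) ut - projSM (T (p t)) ut) := by abel
          rw [this]; exact norm_add_le _ _
      _ ≤ 4 * τ / δ₀ + ε₀ / 16 := by
          apply add_le_add
          · rw [projSM_sub]
            exact le_trans (projSM_norm_le _) huP
          · have := hchartP ut
            rw [hunit_t] at this
            calc ‖projSM (T (p s)) ut - projSM (T (p t)) ut‖ ≤ 2 * (ε₀/32) * 1 := this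
              _ = ε₀ / 16 := by ring
  have hconQ : ‖conormalT T (q s) (p s) - conormalT T (q t) (p t)‖ ≤ 4 * τ / δ₀ + ε₀ / 16 := by
    unfold conormalT
    set us : Euc n := ‖q s - p s‖⁻¹ • (q s - p s)
    set ut : Euc n := ‖q t - p t‖⁻¹ • (q t - p t)
    calc ‖projSM (T (q s)) us - projSM (T (q t)) ut‖
        ≤ ‖projSM (T (q s)) us - projSM (T (q s)) ut‖ +
          ‖projSM (T (q s)) ut - projSM (T (q t)) ut‖ := by
          have : projSM (T (q s)) us - projSM (T (q t)) ut =
            (projSM (T (q s)) us - projSM (T (q s)) ut) +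
            (projSM (T (q s)) ut - projSM (T (q t)) ut) := by abel
          rw [this]; exact norm_add_le _ _
      _ ≤ 4 * τ / δ₀ + ε₀ / 16 := by
          apply add_le_add
          · rw [projSM_sub]
            exact le_trans (projSM_norm_le _) huQ
          · have := hchartQ ut
            rw [hunit_t'] at this
            calc ‖projSM (T (q s)) ut - projSM (T (q t)) ut‖ ≤ 2 * (ε₀/32) * 1 := this
              _ = ε₀ / 16 := by ring
  -- squares
  have hsqP : |‖conormalT T (p s) (q s)‖ ^ 2 - ‖conormalT T (p t) (q t)‖ ^ 2|
      ≤ 2 * (4 * τ / δ₀ + ε₀ / 16) := by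
    have hb1 := norm_conormalT_le (T := T) hne_s
    have hb2 := norm_conormalT_le (T := T) hne_t
    have habs : |‖conormalT T (p s) (q s)‖ - ‖conormalT T (p t) (q t)‖| ≤
        ‖conormalT T (p s) (q s) - conormalT T (p t) (q t)‖ := abs_norm_sub_norm_le _ _
    have h1 : (0:ℝ) ≤ ‖conormalT T (p s) (q s)‖ := norm_nonneg _
    have h2 : (0:ℝ) ≤ ‖conormalT T (p t) (q t)‖ := norm_nonneg _
    rw [abs_le] at habs ⊢
    constructor <;> nlinarith [hconP]
  have hsqQ : |‖conormalT T (q s) (p s)‖ ^ 2 - ‖conormalT T (q t) (p t)‖ ^ 2|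
      ≤ 2 * (4 * τ / δ₀ + ε₀ / 16) := by
    have hb1 := norm_conormalT_le (T := T) (Ne.symm hne_s)
    have hb2 := norm_conormalT_le (T := T) (Ne.symm hne_t)
    have habs : |‖conormalT T (q s) (p s)‖ - ‖conormalT T (q t) (p t)‖| ≤
        ‖conormalT T (q s) (p s) - conormalT T (q t) (p t)‖ := abs_norm_sub_norm_le _ _
    have h1 : (0:ℝ) ≤ ‖conormalT T (q s) (p s)‖ := norm_nonneg _
    have h2 : (0:ℝ) ≤ ‖conormalT T (q t) (p t)‖ := norm_nonneg _
    rw [abs_le] at habs ⊢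
    constructor <;> nlinarith [hconQ]
  -- final bound
  have hτbound : 4 * τ / δ₀ ≤ ε₀ / 16 := by
    have h1 : τ ≤ ε₀ * δ₀ / 64 := min_le_right _ _
    rw [div_le_iff₀ hδ₀]
    nlinarith
  have : |gfun T p q s - gfun T p q t| ≤
      |‖conormalT T (p s) (q s)‖ ^ 2 - ‖conormalT T (p t) (q t)‖ ^ 2| +
      |‖conormalT T (q s) (p s)‖ ^ 2 - ‖conormalT T (q t) (p t)‖ ^ 2| := by
    unfold gfun
    have : ‖conormalT T (p s) (q s)‖ ^ 2 + ‖conormalT T (q s) (p s)‖ ^ 2 -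
        (‖conormalT T (p t) (q t)‖ ^ 2 + ‖conormalT T (q t) (p t)‖ ^ 2) =
        (‖conormalT T (p s) (q s)‖ ^ 2 - ‖conormalT T (p t) (q t)‖ ^ 2) +
        (‖conormalT T (q s) (p s)‖ ^ 2 - ‖conormalT T (q t) (p t)‖ ^ 2) := by ring
    rw [this]
    exact abs_add_le _ _
  linarith


end Flow
end Aux

/-- If a chord shortening flow relative to a compact smooth embedded submanifold exists for all
time `t ≥ 0`, then `‖η^T‖² = |η^T(p)|² + |η^T(q)|² → 0` as `t → ∞`. -/
theorem chord_statement_9 (n k : ℕ) (S : Set (Euc n)) (T : Euc n → Submodule ℝ (Euc n))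
    (hsub : IsSubmanifold n k S T) (hcpt : IsCompact S)
    (p q : ℝ → Euc n) (hflow : IsCSFOn S T (Set.Ici 0) p q) :
    Tendsto (fun t => ‖conormalT T (p t) (q t)‖ ^ 2 + ‖conormalT T (q t) (p t)‖ ^ 2)
      atTop (nhds 0) := by
  -- Step 1: a uniform positive lower bound for the chord length.
  obtain ⟨δ₂, hδ₂, hchart⟩ := global_chart hsub hcpt (ε := 1) one_pos
  have hlower : ∀ t ∈ Ici (0:ℝ), δ₂ ≤ ‖p t - q t‖ := by
    by_contra hcon
    push_neg at hcon
    obtain ⟨t₀, ht₀, hlt⟩ := hcon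
    have hg14 : ∀ t ∈ Icc t₀ (t₀ + 4 * ‖p t₀ - q t₀‖ + 4), (1:ℝ)/4 ≤ gfun T p q t := by
      intro t ht
      have ht0 : t ∈ Ici (0:ℝ) := le_trans ht₀ ht.1
      obtain ⟨hpS, hqS, hne, _, _⟩ := hflow t ht0
      have hmono : ‖p t - q t‖ ≤ ‖p t₀ - q t₀‖ := ell_antitone hflow ht₀ ht0 ht.1
      have hsmall : ‖q t - p t‖ < δ₂ := by
        rw [norm_sub_rev]; linarith
      have h12 := (hchart (p t) hpS (q t) hqS hsmall).2 hne
      have : conormalT T (p t) (q t) = projSM (T (p t)) (‖p t - q t‖⁻¹ • (p t - q t)) := rfl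
      have hsq : (1:ℝ)/4 ≤ ‖conormalT T (p t) (q t)‖ ^ 2 := by
        rw [this]
        nlinarith [h12]
      have := gfun_nonneg (T := T) (p := p) (q := q) t
      unfold gfun at *
      nlinarith [sq_nonneg ‖conormalT T (q t) (p t)‖]
    have hdrop := ell_drop hflow (a := t₀) (b := t₀ + 4 * ‖p t₀ - q t₀‖ + 4) (c := 1/4)
      ht₀ (by nlinarith [ell_pos hflow ht₀]) hg14
    have hpos := ell_pos hflow (t := t₀ + 4 * ‖p t₀ - q t₀‖ + 4)
      (by simp only [mem_Ici] at *; nlinarith [ell_pos hflow ht₀])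
    nlinarith [ell_pos hflow ht₀]
  -- Step 2: Barbalat-type argument.
  rw [Metric.tendsto_atTop]
  intro ε hε
  by_contra hcon
  push_neg at hcon
  -- uniform continuity modulus
  obtain ⟨τ, hτ, hUC⟩ := conormal_P_diff hflow hsub hcpt hδ₂ hlower (ε₀ := ε / 2)
    (by positivity)
  -- arbitrarily late times with gfun ≥ ε
  have hlate : ∀ N : ℝ, ∃ t ≥ max N 0, ε ≤ gfun T p q t := by
    intro N
    obtain ⟨t, htN, habs⟩ := hcon (max N 0)
    refine ⟨t, htN, ?_⟩
    have ht0 : (0:ℝ) ≤ t := le_trans (le_max_right N 0) htN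
    have heq : dist (‖conormalT T (p t) (q t)‖ ^ 2 + ‖conormalT T (q t) (p t)‖ ^ 2) 0
        = gfun T p q t := by
      rw [Real.dist_0_eq_abs]
      exact abs_of_nonneg (gfun_nonneg (T := T) (p := p) (q := q) t)
    rw [heq] at habs
    exact habs
  -- iterative drop
  have hiter : ∀ m : ℕ, ∃ t ∈ Ici (0:ℝ),
      ‖p t - q t‖ ≤ ‖p 0 - q 0‖ - m * (ε / 2 * τ) := by
    intro m
    induction m with
    | zero => exact ⟨0, mem_Ici.mpr le_rfl, by simp⟩
    | succ m ih =>
      obtain ⟨tm, htm, hm⟩ := ih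
      obtain ⟨t', ht', hgt'⟩ := hlate tm
      have ht'0 : t' ∈ Ici (0:ℝ) := le_trans (le_max_right tm 0) ht'
      have ht'm : tm ≤ t' := le_trans (le_max_left tm 0) ht'
      have hgs : ∀ s ∈ Icc t' (t' + τ), ε / 2 ≤ gfun T p q s := by
        intro s hs
        have hs0 : s ∈ Ici (0:ℝ) := le_trans ht'0 hs.1
        have hd : |s - t'| ≤ τ := by
          rw [abs_of_nonneg (by linarith [hs.1])]
          linarith [hs.2]
        have := hUC s hs0 t' ht'0 hd
        rw [abs_le] at this
        linarith
      have hdrop := ell_drop hflow (a := t') (b := t' + τ) (c := ε / 2)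
        ht'0 (by linarith) hgs
      have hmono : ‖p t' - q t'‖ ≤ ‖p tm - q tm‖ := ell_antitone hflow htm ht'0 ht'm
      refine ⟨t' + τ, by simp only [mem_Ici] at *; linarith, ?_⟩
      push_cast
      have : ((m:ℝ) + 1) * (ε / 2 * τ) = m * (ε / 2 * τ) + ε / 2 * τ := by ring
      rw [this]
      linarith
  -- contradiction
  obtain ⟨m, hm⟩ := exists_nat_gt (‖p 0 - q 0‖ / (ε / 2 * τ))
  obtain ⟨t, ht, hle⟩ := hiter m
  have h1 : ‖p 0 - q 0‖ < m * (ε / 2 * τ) := by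
    rw [div_lt_iff₀ (by positivity)] at hm
    linarith
  have h2 := ell_pos hflow ht
  linarith

end
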